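/- A Hausdorff paracompact local metric space (Z, 𝔇) is induced by a global metric: there exists a metric D on Z with {(Z, D)} ∈ 𝔇, i.e., D is locally equal to the given local metric. -/

import Mathlib

open Set Topology

/-- A Hausdorff paracompact local metric space `(Z, 𝔇)` — given by a cover
`{(Z_i, d_i)}` of `Z` by locally equal metric spaces, with the topology
generated by all the metric balls — is induced by a global metric: there is a
metric `D` on `Z` inducing the same topology and agreeing, near each point,
with one of the metrics `d_i`. -/
theorem hausdorff_paracompact_local_metric_space_is_metrizable
    {Z : Type*} {ι : Type*} (Zi : ι → Set Z) (di : ι → Z → Z → ℝ)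
    (hcover : (⋃ i, Zi i) = Set.univ)
    -- each `d_i` is a metric on `Z_i`
    (hnonneg : ∀ i, ∀ x ∈ Zi i, ∀ y ∈ Zi i, 0 ≤ di i x y)
    (hsymm : ∀ i, ∀ x ∈ Zi i, ∀ y ∈ Zi i, di i x y = di i y x)
    (hzero : ∀ i, ∀ x ∈ Zi i, ∀ y ∈ Zi i, (di i x y = 0 ↔ x = y))
    (htri : ∀ i, ∀ x ∈ Zi i, ∀ y ∈ Zi i, ∀ z ∈ Zi i,
      di i x z ≤ di i x y + di i y z)
    -- overlaps are open in each of the metric spaces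
    (hopen : ∀ i j, ∀ x ∈ Zi i ∩ Zi j, ∃ r > (0:ℝ),
      {y ∈ Zi i | di i x y < r} ⊆ Zi j)
    -- the metrics are locally equal on the overlaps
    (hlocal : ∀ i j, ∀ x ∈ Zi i ∩ Zi j, ∃ r > (0:ℝ),
      ∀ y ∈ Zi i ∩ Zi j, ∀ z ∈ Zi i ∩ Zi j,
        di i x y < r → di i x z < r → di i y z = di j y z) :
    ∀ t : TopologicalSpace Z,
      t = TopologicalSpace.generateFrom
        {B | ∃ i, ∃ x ∈ Zi i, ∃ r : ℝ, B = {y ∈ Zi i | di i x y < r}} →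
      @T2Space Z t → @ParacompactSpace Z t →
      ∃ D : Z → Z → ℝ,
        (∀ x y : Z, 0 ≤ D x y) ∧
        (∀ x y : Z, D x y = D y x) ∧
        (∀ x y : Z, (D x y = 0 ↔ x = y)) ∧
        (∀ x y z : Z, D x z ≤ D x y + D y z) ∧
        -- `D` induces the topology of `(Z, 𝔇)`
        (t = TopologicalSpace.generateFrom
          {B | ∃ x : Z, ∃ r : ℝ, B = {y | D x y < r}}) ∧
        -- `D` agrees with some `d_i` near each point
        (∀ x : Z, ∃ i, x ∈ Zi i ∧ ∃ r > (0:ℝ),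
          ∀ y z : Z, D x y < r → D x z < r →
            y ∈ Zi i ∧ z ∈ Zi i ∧ D y z = di i y z) := by
  classical
  intro t ht hT2 hPara
  subst ht
  letI tZ : TopologicalSpace Z := TopologicalSpace.generateFrom
    {B | ∃ i, ∃ x ∈ Zi i, ∃ r : ℝ, B = {y ∈ Zi i | di i x y < r}}
  haveI : T2Space Z := hT2
  haveI : ParacompactSpace Z := hPara
  have dzero : ∀ i x, x ∈ Zi i → di i x x = 0 := fun i x hx => (hzero i x hx x hx).2 rfl
  have hGopen : ∀ i x, x ∈ Zi i → ∀ r : ℝ, IsOpen {y ∈ Zi i | di i x y < r} :=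
    fun i x hx r => TopologicalSpace.isOpen_generateFrom_of_mem ⟨i, x, hx, r, rfl⟩
  have hZopen : ∀ i, IsOpen (Zi i) := by
    intro i
    have he : Zi i = ⋃ x ∈ Zi i, {y ∈ Zi i | di i x y < 1} := by
      ext y
      constructor
      · intro hy
        exact mem_biUnion hy ⟨hy, by rw [dzero i y hy]; norm_num⟩
      · rintro ⟨_, ⟨x, rfl⟩, hy⟩
        simp only [mem_iUnion, mem_setOf_eq] at hy
        exact hy.choose_spec.1
    rw [he]
    exact isOpen_biUnion fun x hx => hGopen i x hx 1
  -- chart transition lemma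
  have trans : ∀ k i x, x ∈ Zi k → x ∈ Zi i → ∀ s : ℝ, 0 < s →
      ∃ r > (0:ℝ), ∀ y ∈ Zi i, di i x y < r → y ∈ Zi k ∧ di k x y < s := by
    intro k i x hxk hxi s hs
    obtain ⟨r1, hr1, h1⟩ := hopen i k x ⟨hxi, hxk⟩
    obtain ⟨r2, hr2, h2⟩ := hlocal i k x ⟨hxi, hxk⟩
    refine ⟨min r1 (min r2 s), by positivity, fun y hy hlt => ?_⟩
    have hyk : y ∈ Zi k := h1 ⟨hy, hlt.trans_le (min_le_left _ _)⟩
    have heq : di i x y = di k x y := by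
      have h0 : di i x x < r2 := by rw [dzero i x hxi]; exact hr2
      exact h2 x ⟨hxi, hxk⟩ y ⟨hy, hyk⟩ h0
        (hlt.trans_le ((min_le_right _ _).trans (min_le_left _ _)))
    refine ⟨hyk, ?_⟩
    rw [← heq]
    exact hlt.trans_le ((min_le_right _ _).trans (min_le_right _ _))
  -- neighborhood basis lemma
  have basis : ∀ U : Set Z, IsOpen U → ∀ x ∈ U, ∀ i, x ∈ Zi i →
      ∃ r > (0:ℝ), ∀ y ∈ Zi i, di i x y < r → y ∈ U := by
    intro U hU
    have hU' : TopologicalSpace.GenerateOpen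
      {B | ∃ i, ∃ x ∈ Zi i, ∃ r : ℝ, B = {y ∈ Zi i | di i x y < r}} U := hU
    clear hU
    induction hU' with
    | basic B hB =>
      rintro x hx i hi
      obtain ⟨k, xk, hxk, s, rfl⟩ := hB
      obtain ⟨hxZk, hxlt⟩ := hx
      obtain ⟨r, hr, h⟩ := trans k i x hxZk hi (s - di k xk x) (by linarith)
      refine ⟨r, hr, fun y hy hlt => ?_⟩
      obtain ⟨hyk, hky⟩ := h y hy hlt
      refine ⟨hyk, ?_⟩
      have := htri k xk hxk x hxZk y hyk
      linarith
    | univ => exact fun x _ i _ => ⟨1, one_pos, fun y _ _ => trivial⟩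
    | inter U V hU hV ihU ihV =>
      rintro x ⟨hxU, hxV⟩ i hi
      obtain ⟨r1, hr1, h1⟩ := ihU x hxU i hi
      obtain ⟨r2, hr2, h2⟩ := ihV x hxV i hi
      exact ⟨min r1 r2, lt_min hr1 hr2, fun y hy hlt =>
        ⟨h1 y hy (hlt.trans_le (min_le_left _ _)), h2 y hy (hlt.trans_le (min_le_right _ _))⟩⟩
    | sUnion S hS ih =>
      rintro x ⟨V, hVS, hxV⟩ i hi
      obtain ⟨r, hr, h⟩ := ih V hVS x hxV i hi
      exact ⟨r, hr, fun y hy hlt => ⟨V, hVS, h y hy hlt⟩⟩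
  -- locally finite refinement and shrinking
  obtain ⟨v, vopen, vcov, vlf, vsub⟩ := precise_refinement Zi hZopen hcover
  obtain ⟨w, wcov, wopen, wcl⟩ :=
    exists_iUnion_eq_closure_subset vopen (fun x => vlf.point_finite x) vcov
  have wsubv : ∀ p, w p ⊆ v p := fun p => subset_closure.trans (wcl p)
  have wZ : ∀ p, w p ⊆ Zi p := fun p => (wsubv p).trans (vsub p)
  have wex : ∀ y : Z, ∃ p, y ∈ w p := fun y => by
    have : y ∈ ⋃ p, w p := by rw [wcov]; trivial
    exact mem_iUnion.1 this
  -- the one-step cost function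
  set σ : Z → Z → ℝ := fun u v =>
    sInf (insert (1:ℝ) {c | ∃ p, u ∈ w p ∧ v ∈ w p ∧ c = di p u v}) with hσ
  have hSnn : ∀ u v : Z, ∀ c ∈ insert (1:ℝ) {c | ∃ p, u ∈ w p ∧ v ∈ w p ∧ c = di p u v},
      (0:ℝ) ≤ c := by
    intro u v c hc
    rcases Set.mem_insert_iff.1 hc with rfl | hc
    · norm_num
    · obtain ⟨p, h1, h2, rfl⟩ := hc
      exact hnonneg p u (wZ p h1) v (wZ p h2)
  have σ_nonneg : ∀ u v, 0 ≤ σ u v := by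
    intro u v
    rw [hσ]
    exact le_csInf ⟨1, mem_insert _ _⟩ (hSnn u v)
  have σ_le_one : ∀ u v, σ u v ≤ 1 := by
    intro u v
    rw [hσ]
    exact csInf_le ⟨0, hSnn u v⟩ (mem_insert _ _)
  have σ_le : ∀ u v p, u ∈ w p → v ∈ w p → σ u v ≤ di p u v := by
    intro u v p h1 h2
    rw [hσ]
    exact csInf_le ⟨0, hSnn u v⟩ (Set.mem_insert_iff.2 (Or.inr ⟨p, h1, h2, rfl⟩))
  have σ_lb : ∀ u v (b : ℝ), b ≤ 1 → (∀ p, u ∈ w p → v ∈ w p → b ≤ di p u v) →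
      b ≤ σ u v := by
    intro u v b hb1 hb2
    rw [hσ]
    refine le_csInf ⟨1, mem_insert _ _⟩ ?_
    intro c hc
    rcases Set.mem_insert_iff.1 hc with rfl | hc
    · exact hb1
    · obtain ⟨p, h1, h2, rfl⟩ := hc
      exact hb2 p h1 h2
  have σ_symm : ∀ u v, σ u v = σ v u := by
    intro u v
    have : (insert (1:ℝ) {c | ∃ p, u ∈ w p ∧ v ∈ w p ∧ c = di p u v})
        = insert (1:ℝ) {c | ∃ p, v ∈ w p ∧ u ∈ w p ∧ c = di p v u} := by
      congr 1
      ext c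
      constructor
      · rintro ⟨p, h1, h2, rfl⟩
        exact ⟨p, h2, h1, (hsymm p u (wZ p h1) v (wZ p h2))⟩
      · rintro ⟨p, h1, h2, rfl⟩
        exact ⟨p, h2, h1, (hsymm p v (wZ p h1) u (wZ p h2))⟩
    rw [hσ]
    beta_reduce
    rw [this]
  have σ_self : ∀ u, σ u u = 0 := by
    intro u
    obtain ⟨p, hp⟩ := wex u
    refine le_antisymm ?_ (σ_nonneg u u)
    have := σ_le u u p hp hp
    rwa [dzero p u (wZ p hp)] at this
  -- chains
  set CS : Z → Z → Set ℝ := fun y z =>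
    {c | ∃ n : ℕ, ∃ u : ℕ → Z, u 0 = y ∧ u n = z ∧
      c = ∑ k ∈ Finset.range n, σ (u k) (u (k+1))} with hCS
  have hCSmem : ∀ y z, σ y z ∈ CS y z := by
    intro y z
    refine ⟨1, fun k => if k = 0 then y else z, by simp, by simp, ?_⟩
    rw [Finset.sum_range_one]
    norm_num
  have hCSnn : ∀ y z : Z, ∀ c ∈ CS y z, (0:ℝ) ≤ c := by
    rintro y z c ⟨n, u, h0, hn, rfl⟩
    exact Finset.sum_nonneg fun k _ => σ_nonneg _ _
  set D : Z → Z → ℝ := fun y z => sInf (CS y z) with hD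
  have D_nonneg : ∀ y z, 0 ≤ D y z := by
    intro y z
    rw [hD]
    exact le_csInf ⟨σ y z, hCSmem y z⟩ (hCSnn y z)
  have D_le_σ : ∀ y z, D y z ≤ σ y z := by
    intro y z
    rw [hD]
    exact csInf_le ⟨0, hCSnn y z⟩ (hCSmem y z)
  have D_self : ∀ y, D y y = 0 :=
    fun y => le_antisymm ((D_le_σ y y).trans_eq (σ_self y)) (D_nonneg y y)
  have CS_symm_sub : ∀ y z, CS y z ⊆ CS z y := by
    rintro y z c ⟨n, u, h0, hn, rfl⟩
    refine ⟨n, fun k => u (n - k), by simpa using hn, by simpa using h0, ?_⟩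
    rw [← Finset.sum_range_reflect (fun k => σ (u k) (u (k+1))) n]
    refine Finset.sum_congr rfl ?_
    intro k hk
    have hkn : k < n := Finset.mem_range.1 hk
    have e1 : n - k = (n - 1 - k) + 1 := by omega
    have e2 : n - (k + 1) = n - 1 - k := by omega
    beta_reduce
    rw [e1, e2]
    exact σ_symm _ _
  have D_symm : ∀ y z, D y z = D z y := by
    intro y z
    rw [hD]
    beta_reduce
    rw [Subset.antisymm (CS_symm_sub y z) (CS_symm_sub z y)]
  have concat : ∀ x y z : Z, ∀ a b : ℝ, a ∈ CS x y → b ∈ CS y z → a + b ∈ CS x z := by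
    rintro x y z a b ⟨n, u, hu0, hun, rfl⟩ ⟨m, v, hv0, hvm, rfl⟩
    refine ⟨n + m, fun k => if k < n then u k else v (k - n), ?_, ?_, ?_⟩
    · by_cases h : 0 < n
      · simp [h, hu0]
      · have hn0 : n = 0 := by omega
        have : x = y := by rw [← hu0, ← hun, hn0]
        simp [h, hv0, ← this]
    · have : ¬ (n + m < n) := by omega
      simp [this, hv0, hvm]
    · rw [Finset.sum_range_add]
      congr 1
      · refine Finset.sum_congr rfl ?_
        intro k hk
        have hkn : k < n := Finset.mem_range.1 hk
        by_cases h1 : k + 1 < n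
        · simp [hkn, h1]
        · have he : k + 1 = n := by omega
          have : v (k + 1 - n) = u (k + 1) := by
            rw [he]; simp [hv0, ← hun]
          simp [hkn, h1, this]
          rw [hv0, ← hun, he]
      · refine Finset.sum_congr rfl ?_
        intro k hk
        have h1 : ¬ (n + k < n) := by omega
        have h2 : ¬ (n + k + 1 < n) := by omega
        have e1 : n + k - n = k := by omega
        have e2 : n + k + 1 - n = k + 1 := by omega
        simp [h1, h2, e1, e2]
  have D_tri : ∀ x y z : Z, D x z ≤ D x y + D y z := by
    intro x y z
    have h1 : ∀ a ∈ CS x y, D x z - a ≤ D y z := by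
      intro a ha
      rw [hD]
      refine le_csInf ⟨σ y z, hCSmem y z⟩ ?_
      intro b hb
      have h2 : D x z ≤ a + b := by
        rw [hD]
        exact csInf_le ⟨0, hCSnn x z⟩ (concat x y z a b ha hb)
      linarith
    have h3 : D x z - D y z ≤ D x y := by
      rw [hD]
      refine le_csInf ⟨σ x y, hCSmem x y⟩ ?_
      intro a ha
      have := h1 a ha
      linarith
    linarith
  -- telescoping lower bound interface
  have D_lb : ∀ y z : Z, ∀ g : Z → ℝ, g y = 0 → (∀ u v : Z, g v - g u ≤ σ u v) →
      g z ≤ D y z := by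
    intro y z g hgy hg
    rw [hD]
    refine le_csInf ⟨σ y z, hCSmem y z⟩ ?_
    rintro c ⟨n, u, h0, hn, rfl⟩
    have tele : g (u n) - g (u 0) = ∑ k ∈ Finset.range n, (g (u (k+1)) - g (u k)) :=
      (Finset.sum_range_sub (fun k => g (u k)) n).symm
    have hle : ∑ k ∈ Finset.range n, (g (u (k+1)) - g (u k))
        ≤ ∑ k ∈ Finset.range n, σ (u k) (u (k+1)) :=
      Finset.sum_le_sum fun k _ => hg (u k) (u (k+1))
    rw [h0, hn, hgy] at tele
    linarith
  -- the per-point good chart and radius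
  have main : ∀ x : Z, ∃ i : ι, ∃ e : ℝ, 0 < e ∧ e ≤ 1 ∧ x ∈ Zi i ∧
      (∀ u, u ∈ Zi i → di i x u < e → u ∈ w i) ∧
      (∀ p, (∃ u, u ∈ Zi i ∧ di i x u < e ∧ u ∈ w p) →
        x ∈ Zi p ∧
        (∀ y, y ∈ Zi i → di i x y < e → y ∈ Zi p ∧ di p x y = di i x y) ∧
        (∀ y, y ∈ Zi p → di p x y < e → y ∈ Zi i ∧ di i x y = di p x y) ∧
        (∀ y z, y ∈ Zi i → di i x y < e → z ∈ Zi i → di i x z < e →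
          di p y z = di i y z)) := by
    intro x
    obtain ⟨i, hxw⟩ := wex x
    have hxZ : x ∈ Zi i := wZ i hxw
    have hJfin : {p | x ∈ closure (w p)}.Finite :=
      (vlf.point_finite x).subset (fun p hp => wcl p hp)
    have hxJmem : ∀ p, x ∈ closure (w p) → x ∈ Zi p := fun p hp => vsub p (wcl p hp)
    have hiJ : x ∈ closure (w i) := subset_closure hxw
    have hper : ∀ p : ι, ∃ r : ℝ, 0 < r ∧ (x ∈ closure (w p) →
        (∀ y, y ∈ Zi i → di i x y < r → y ∈ Zi p ∧ di p x y = di i x y) ∧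
        (∀ y, y ∈ Zi p → di p x y < r → y ∈ Zi i ∧ di i x y = di p x y) ∧
        (∀ y z, y ∈ Zi i → di i x y < r → z ∈ Zi i → di i x z < r →
          di p y z = di i y z)) := by
      intro p
      by_cases hp : x ∈ closure (w p)
      · have hxp : x ∈ Zi p := hxJmem p hp
        obtain ⟨r1, hr1, h1⟩ := hopen i p x ⟨hxZ, hxp⟩
        obtain ⟨r2, hr2, h2⟩ := hlocal i p x ⟨hxZ, hxp⟩
        obtain ⟨r3, hr3, h3⟩ := hopen p i x ⟨hxp, hxZ⟩
        obtain ⟨r4, hr4, h4⟩ := hlocal p i x ⟨hxp, hxZ⟩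
        refine ⟨min (min r1 r2) (min r3 r4), by positivity, fun _ => ⟨?_, ?_, ?_⟩⟩
        · intro y hy hlt
          have hyp : y ∈ Zi p :=
            h1 ⟨hy, hlt.trans_le ((min_le_left _ _).trans (min_le_left _ _))⟩
          have hxx : di i x x < r2 := by rw [dzero i x hxZ]; exact hr2
          have := h2 x ⟨hxZ, hxp⟩ y ⟨hy, hyp⟩ hxx
            (hlt.trans_le ((min_le_left _ _).trans (min_le_right _ _)))
          exact ⟨hyp, this.symm⟩
        · intro y hy hlt
          have hyi : y ∈ Zi i :=
            h3 ⟨hy, hlt.trans_le ((min_le_right _ _).trans (min_le_left _ _))⟩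
          have hxx : di p x x < r4 := by rw [dzero p x hxp]; exact hr4
          have := h4 x ⟨hxp, hxZ⟩ y ⟨hy, hyi⟩ hxx
            (hlt.trans_le ((min_le_right _ _).trans (min_le_right _ _)))
          exact ⟨hyi, this.symm⟩
        · intro y z hy hly hz hlz
          have hyp : y ∈ Zi p :=
            h1 ⟨hy, hly.trans_le ((min_le_left _ _).trans (min_le_left _ _))⟩
          have hzp : z ∈ Zi p :=
            h1 ⟨hz, hlz.trans_le ((min_le_left _ _).trans (min_le_left _ _))⟩
          exact (h2 y ⟨hy, hyp⟩ z ⟨hz, hzp⟩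
            (hly.trans_le ((min_le_left _ _).trans (min_le_right _ _)))
            (hlz.trans_le ((min_le_left _ _).trans (min_le_right _ _)))).symm
      · exact ⟨1, one_pos, fun h => absurd h hp⟩
    choose rad hradpos hradP using hper
    obtain ⟨N, hN, hNfin⟩ := vlf x
    have hFfin : {p | (v p ∩ N).Nonempty ∧ x ∉ closure (w p)}.Finite :=
      hNfin.subset (fun p hp => hp.1)
    have hOopen : IsOpen (interior N ∩ w i ∩
        ⋂ p ∈ {p | (v p ∩ N).Nonempty ∧ x ∉ closure (w p)}, (closure (w p))ᶜ) :=
      ((isOpen_interior).inter (wopen i)).inter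
        (hFfin.isOpen_biInter fun p _ => (isClosed_closure).isOpen_compl)
    have hxO : x ∈ interior N ∩ w i ∩
        ⋂ p ∈ {p | (v p ∩ N).Nonempty ∧ x ∉ closure (w p)}, (closure (w p))ᶜ := by
      refine ⟨⟨mem_interior_iff_mem_nhds.2 hN, hxw⟩, ?_⟩
      exact mem_biInter fun p hp => hp.2
    obtain ⟨r0, hr0, hr0P⟩ := basis _ hOopen x hxO i hxZ
    have hiJf : i ∈ hJfin.toFinset := hJfin.mem_toFinset.2 hiJ
    refine ⟨i, min (min 1 r0) (hJfin.toFinset.inf' ⟨i, hiJf⟩ rad), ?_, ?_, hxZ, ?_, ?_⟩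
    · refine lt_min (lt_min one_pos hr0) ?_
      exact (Finset.lt_inf'_iff _).2 fun p _ => hradpos p
    · exact (min_le_left _ _).trans (min_le_left _ _)
    · intro u hu hlt
      have := hr0P u hu
        (hlt.trans_le ((min_le_left _ _).trans (min_le_right _ _)))
      exact this.1.2
    · rintro p ⟨u, huZ, hult, hup⟩
      have huO := hr0P u huZ
        (hult.trans_le ((min_le_left _ _).trans (min_le_right _ _)))
      have hpJ : x ∈ closure (w p) := by
        by_contra hpJ
        have hpF : p ∈ {p | (v p ∩ N).Nonempty ∧ x ∉ closure (w p)} :=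
          ⟨⟨u, wsubv p hup, interior_subset huO.1.1⟩, hpJ⟩
        have hunc : u ∈ (closure (w p))ᶜ := by
          have := huO.2
          rw [mem_iInter₂] at this
          exact this p hpF
        exact hunc (subset_closure hup)
      have heJ : min (min 1 r0) (hJfin.toFinset.inf' ⟨i, hiJf⟩ rad) ≤ rad p :=
        (min_le_right _ _).trans (Finset.inf'_le _ (hJfin.mem_toFinset.2 hpJ))
      obtain ⟨P1, P2, P3⟩ := hradP p hpJ
      exact ⟨hxJmem p hpJ,
        fun y hy hlt => P1 y hy (hlt.trans_le heJ),
        fun y hy hlt => P2 y hy (hlt.trans_le heJ),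
        fun y z hy hly hz hlz =>
          P3 y z hy (hly.trans_le heJ) hz (hlz.trans_le heJ)⟩
  choose i₀ η hη1 hη2 hxZi hUw hGood using main
  -- the key lower bound
  have lower : ∀ x y, y ∈ Zi (i₀ x) → di (i₀ x) x y < η x / 8 → ∀ z,
      ((z ∈ Zi (i₀ x) ∧ di (i₀ x) x z < η x) →
        min (η x / 4) (di (i₀ x) y z) ≤ D y z) ∧
      (¬(z ∈ Zi (i₀ x) ∧ di (i₀ x) x z < η x) → η x / 4 ≤ D y z) := by
    intro x y hyZ hy8
    have hepos : 0 < η x := hη1 x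
    have hele1 : η x ≤ 1 := hη2 x
    have hxZ : x ∈ Zi (i₀ x) := hxZi x
    set f : Z → ℝ := fun u =>
      if h : u ∈ Zi (i₀ x) ∧ di (i₀ x) x u < η x
      then min (η x / 4) (di (i₀ x) y u) else η x / 4 with hf
    have hf_pos : ∀ u (h : u ∈ Zi (i₀ x) ∧ di (i₀ x) x u < η x),
        f u = min (η x / 4) (di (i₀ x) y u) := by
      intro u h
      rw [hf]
      beta_reduce
      rw [dif_pos h]
    have hf_neg : ∀ u, ¬(u ∈ Zi (i₀ x) ∧ di (i₀ x) x u < η x) → f u = η x / 4 := by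
      intro u h
      rw [hf]
      beta_reduce
      rw [dif_neg h]
    have hf_nonneg : ∀ u, 0 ≤ f u := by
      intro u
      by_cases h : u ∈ Zi (i₀ x) ∧ di (i₀ x) x u < η x
      · rw [hf_pos u h]
        exact le_min (by linarith) (hnonneg _ y hyZ u h.1)
      · rw [hf_neg u h]; linarith
    have hf_le : ∀ u, f u ≤ η x / 4 := by
      intro u
      by_cases h : u ∈ Zi (i₀ x) ∧ di (i₀ x) x u < η x
      · rw [hf_pos u h]; exact min_le_left _ _
      · rw [hf_neg u h]
    have hfy : f y = 0 := by
      rw [hf_pos y ⟨hyZ, by linarith⟩, dzero _ y hyZ]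
      exact min_eq_right (by linarith)
    have hstep' : ∀ u v p, u ∈ w p → v ∈ w p → f v - f u ≤ di p u v := by
      intro u v p hup hvp
      have huZp : u ∈ Zi p := wZ p hup
      have hvZp : v ∈ Zi p := wZ p hvp
      have hdpnn : 0 ≤ di p u v := hnonneg p u huZp v hvZp
      rcases le_or_gt (f v) (f u) with h | h
      · linarith
      · have hfu4 : f u < η x / 4 := h.trans_le (hf_le v)
        have hu : u ∈ Zi (i₀ x) ∧ di (i₀ x) x u < η x := by
          by_contra hc
          rw [hf_neg u hc] at hfu4
          linarith
        have hdyu : di (i₀ x) y u < η x / 4 := by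
          by_contra hge
          push_neg at hge
          rw [hf_pos u hu, min_eq_left hge] at hfu4
          linarith
        have hfueq : f u = di (i₀ x) y u := by
          rw [hf_pos u hu]
          exact min_eq_right hdyu.le
        rcases le_or_gt (η x / 4) (di p u v) with hc | hc
        · have := hf_le v
          have := hf_nonneg u
          linarith
        · obtain ⟨hxZp, G1, G2, G3⟩ := hGood x p ⟨u, hu.1, hu.2, hup⟩
          have hdxu : di (i₀ x) x u ≤ di (i₀ x) x y + di (i₀ x) y u :=
            htri _ x hxZ y hyZ u hu.1
          obtain ⟨-, hpxu⟩ := G1 u hu.1 hu.2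
          have hpxv : di p x v ≤ di p x u + di p u v := htri p x hxZp u huZp v hvZp
          have hpxv' : di p x v < η x := by rw [hpxu] at hpxv; linarith
          obtain ⟨hvZi, hvd⟩ := G2 v hvZp hpxv'
          have hvcond : v ∈ Zi (i₀ x) ∧ di (i₀ x) x v < η x :=
            ⟨hvZi, by rw [hvd]; exact hpxv'⟩
          have hpuv : di p u v = di (i₀ x) u v := G3 u v hu.1 hu.2 hvZi hvcond.2
          have htyv : di (i₀ x) y v ≤ di (i₀ x) y u + di (i₀ x) u v :=
            htri _ y hyZ u hu.1 v hvZi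
          have hmin : f v ≤ di (i₀ x) y v := by
            rw [hf_pos v hvcond]
            exact min_le_right _ _
          rw [hfueq]
          linarith
    have hstep : ∀ u v, f v - f u ≤ σ u v := by
      intro u v
      refine σ_lb u v _ ?_ (fun p h1 h2 => hstep' u v p h1 h2)
      have := hf_le v
      have := hf_nonneg u
      linarith
    intro z
    have hfz := D_lb y z f hfy hstep
    constructor
    · intro hz
      rwa [hf_pos z hz] at hfz
    · intro hz
      rwa [hf_neg z hz] at hfz
  have hsmall : ∀ x z, D x z < η x / 8 → z ∈ Zi (i₀ x) ∧ di (i₀ x) x z ≤ D x z := by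
    intro x z h
    have hepos := hη1 x
    have h8 : di (i₀ x) x x < η x / 8 := by rw [dzero _ x (hxZi x)]; linarith
    obtain ⟨L1, L2⟩ := lower x x (hxZi x) h8 z
    by_cases hz : z ∈ Zi (i₀ x) ∧ di (i₀ x) x z < η x
    · have hm := L1 hz
      refine ⟨hz.1, ?_⟩
      rcases le_total (η x / 4) (di (i₀ x) x z) with hc | hc
      · rw [min_eq_left hc] at hm; linarith
      · rwa [min_eq_right hc] at hm
    · have := L2 hz
      exact absurd h (by linarith)
  have hDeq : ∀ x y z, y ∈ Zi (i₀ x) → di (i₀ x) x y < η x / 8 →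
      z ∈ Zi (i₀ x) → di (i₀ x) x z < η x / 8 → D y z = di (i₀ x) y z := by
    intro x y z hy hy8 hz hz8
    have hepos := hη1 x
    have hupper : D y z ≤ di (i₀ x) y z := by
      have hyw : y ∈ w (i₀ x) := hUw x y hy (by linarith)
      have hzw : z ∈ w (i₀ x) := hUw x z hz (by linarith)
      exact (D_le_σ y z).trans (σ_le y z _ hyw hzw)
    obtain ⟨L1, -⟩ := lower x y hy hy8 z
    have h1 := L1 ⟨hz, by linarith⟩
    have h2 : di (i₀ x) y z ≤ di (i₀ x) y x + di (i₀ x) x z :=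
      htri _ y hy x (hxZi x) z hz
    have h3 : di (i₀ x) y x = di (i₀ x) x y := (hsymm _ x (hxZi x) y hy).symm
    have h4 : di (i₀ x) y z < η x / 4 := by linarith
    rw [min_eq_right h4.le] at h1
    exact le_antisymm hupper h1
  have hDzero : ∀ y z, D y z = 0 → y = z := by
    intro y z h
    have hepos := hη1 y
    have hs := hsmall y z (by rw [h]; linarith)
    have h0 : di (i₀ y) y z = 0 :=
      le_antisymm (hs.2.trans_eq h) (hnonneg _ y (hxZi y) z hs.1)
    exact (hzero _ y (hxZi y) z hs.1).1 h0
  -- topology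
  have hDball_open : ∀ (x : Z) (r : ℝ), IsOpen {y | D x y < r} := by
    intro x r
    rw [isOpen_iff_forall_mem_open]
    intro u hu
    have hepos := hη1 u
    have hDxu : D x u < r := hu
    refine ⟨{y ∈ Zi (i₀ u) | di (i₀ u) u y < min (r - D x u) (η u)}, ?_,
      hGopen (i₀ u) u (hxZi u) _,
      ⟨hxZi u, by rw [dzero _ u (hxZi u)]; exact lt_min (by linarith) hepos⟩⟩
    rintro y ⟨hyZ, hylt⟩
    have hyw : y ∈ w (i₀ u) := hUw u y hyZ (hylt.trans_le (min_le_right _ _))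
    have huw : u ∈ w (i₀ u) := hUw u u (hxZi u) (by rw [dzero _ u (hxZi u)]; linarith)
    have hDuy : D u y ≤ di (i₀ u) u y := (D_le_σ u y).trans (σ_le u y _ huw hyw)
    have htr := D_tri x u y
    have := hylt.trans_le (min_le_left _ _)
    simp only [mem_setOf_eq]
    linarith
  have hChart_open : ∀ B ∈ {B | ∃ i, ∃ x ∈ Zi i, ∃ r : ℝ, B = {y ∈ Zi i | di i x y < r}},
      IsOpen[TopologicalSpace.generateFrom {B | ∃ x : Z, ∃ r : ℝ, B = {y | D x y < r}}] B := by
    rintro B ⟨k, xk, hxk, s, rfl⟩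
    rw [@isOpen_iff_forall_mem_open Z
      (TopologicalSpace.generateFrom {B | ∃ x : Z, ∃ r : ℝ, B = {y | D x y < r}}) _]
    rintro u ⟨huk, hus⟩
    have hepos := hη1 u
    obtain ⟨ρ, hρ, hmap⟩ := trans k (i₀ u) u huk (hxZi u) (s - di k xk u) (by linarith)
    refine ⟨{y | D u y < min ρ (η u / 8)}, ?_,
      TopologicalSpace.isOpen_generateFrom_of_mem ⟨u, min ρ (η u / 8), rfl⟩, ?_⟩
    · intro y hy
      have hy' : D u y < min ρ (η u / 8) := hy
      obtain ⟨hyZ, hyd⟩ := hsmall u y (hy'.trans_le (min_le_right _ _))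
      have h2 : di (i₀ u) u y < ρ := hyd.trans_lt (hy'.trans_le (min_le_left _ _))
      obtain ⟨hyk, hky⟩ := hmap y hyZ h2
      have := htri k xk hxk u huk y hyk
      exact ⟨hyk, by linarith⟩
    · show D u u < min ρ (η u / 8)
      rw [D_self]
      exact lt_min hρ (by linarith)
  have htopo : (TopologicalSpace.generateFrom
      {B | ∃ i, ∃ x ∈ Zi i, ∃ r : ℝ, B = {y ∈ Zi i | di i x y < r}} : TopologicalSpace Z)
      = TopologicalSpace.generateFrom {B | ∃ x : Z, ∃ r : ℝ, B = {y | D x y < r}} := by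
    refine le_antisymm ?_ ?_
    · refine le_generateFrom ?_
      rintro s ⟨x, r, rfl⟩
      exact hDball_open x r
    · exact @le_generateFrom Z
        (TopologicalSpace.generateFrom {B | ∃ x : Z, ∃ r : ℝ, B = {y | D x y < r}})
        _ hChart_open
  refine ⟨D, D_nonneg, D_symm, ?_, D_tri, htopo, ?_⟩
  · intro x y
    exact ⟨hDzero x y, fun h => h ▸ D_self x⟩
  · intro x
    have hepos := hη1 x
    refine ⟨i₀ x, hxZi x, η x / 8, by linarith, fun y z hy hz => ?_⟩
    obtain ⟨hy1, hy2⟩ := hsmall x y hy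
    obtain ⟨hz1, hz2⟩ := hsmall x z hz
    exact ⟨hy1, hz1, hDeq x y z hy1 (by linarith) hz1 (by linarith)⟩
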